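/- Let d, N ∈ ℕ with d ≥ 1, let M be a positive even integer, and let x_1, …, x_N ∈ ℝ^d. Let C_n := (sinc(Mπ(x_j − x_s)))_{j,s=1}^N be the nonequispaced sinc matrix. Then the diagonal matrix W = diag(w_1,…,w_N) with entries w_j := ( M^d · ∑_{s=1}^N sinc²(Mπ(x_j − x_s)) )^{−1} (well-defined, since the s = j term equals 1) minimizes the squared Frobenius norm ‖ M^d · C_n W − I_N ‖_F² over all diagonal matrices W ∈ ℂ^{N×N}, where sinc² of a vector means the square of the product of the one-dimensional sinc functions of its components. -/

import Mathlib

noncomputable section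
open scoped Real BigOperators
open Complex Matrix

/-- The one-dimensional `sinc` function: `sin x / x` for `x ≠ 0` and `1` at `0`. -/
def sinc (x : ℝ) : ℝ := if x = 0 then 1 else Real.sin x / x

/-- The `d`-variate `sinc` function, the product of the componentwise `sinc`s. -/
def dsinc {d : ℕ} (x : Fin d → ℝ) : ℝ := ∏ t, sinc (x t)

lemma sinc_neg (x : ℝ) : sinc (-x) = sinc x := by
  unfold sinc
  rcases eq_or_ne x 0 with h | h
  · simp [h]
  · simp [h, Real.sin_neg, neg_div_neg_eq]

lemma sinc_zero : sinc 0 = 1 := by simp [sinc]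

lemma colval {N : ℕ} (K : ℝ) (A : Fin N → ℝ) (s : Fin N) (hAs : A s = 1) (z : ℂ) :
    ∑ j, ‖(K:ℂ) * (A j : ℂ) * z - (if j = s then 1 else 0)‖ ^ 2 =
      K^2 * (∑ i, A i ^ 2) * Complex.normSq z - 2*K*z.re + 1 := by
  have key : ∀ j, ‖(K:ℂ) * (A j : ℂ) * z - (if j = s then 1 else 0)‖ ^ 2 =
      K^2 * A j^2 * Complex.normSq z + (if j = s then (-(2*K*z.re) + 1) else 0) := by
    intro j
    by_cases h : j = s
    · subst h
      rw [hAs]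
      simp only [if_pos rfl, if_true, Complex.ofReal_one, mul_one]
      rw [Complex.sq_norm]
      simp [Complex.normSq_sub, Complex.normSq_mul, Complex.normSq_ofReal]
      ring
    · simp only [if_neg h, sub_zero, add_zero]
      rw [Complex.sq_norm]
      simp only [Complex.normSq_mul, Complex.normSq_ofReal]
      ring
  rw [Finset.sum_congr rfl fun j _ => key j, Finset.sum_add_distrib,
    Finset.sum_ite_eq' Finset.univ s]
  simp only [Finset.mem_univ, if_pos]
  rw [← Finset.sum_mul, ← Finset.mul_sum]
  ring

lemma dsinc_neg {d : ℕ} (y : Fin d → ℝ) : dsinc (fun t => -(y t)) = dsinc y := by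
  unfold dsinc
  exact Finset.prod_congr rfl fun t _ => sinc_neg (y t)

lemma col {N : ℕ} (K : ℝ) (hK : 0 < K) (A : Fin N → ℝ) (s : Fin N) (hAs : A s = 1) (z : ℂ) :
    ∑ j, ‖(K:ℂ) * (A j : ℂ) * ((((K * ∑ i, A i ^ 2)⁻¹ : ℝ)) : ℂ) - (if j = s then 1 else 0)‖ ^ 2 ≤
      ∑ j, ‖(K:ℂ) * (A j : ℂ) * z - (if j = s then 1 else 0)‖ ^ 2 := by
  have hS : (1:ℝ) ≤ ∑ i, A i ^ 2 := by
    have := Finset.single_le_sum (f := fun i => A i ^ 2) (fun i _ => sq_nonneg _)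
      (Finset.mem_univ s)
    simpa [hAs] using this
  have hS0 : (0:ℝ) < ∑ i, A i ^ 2 := lt_of_lt_of_le one_pos hS
  rw [colval K A s hAs, colval K A s hAs]
  set S := ∑ i, A i ^ 2 with hSdef
  have hKS : K * S ≠ 0 := by positivity
  have h1 : Complex.normSq (((K * S)⁻¹ : ℝ) : ℂ) = ((K*S)⁻¹)^2 := by
    rw [Complex.normSq_ofReal]; ring
  have h2 : (((K * S)⁻¹ : ℝ) : ℂ).re = (K*S)⁻¹ := Complex.ofReal_re _
  rw [h1, h2, Complex.normSq_apply]
  have hlhs : K ^ 2 * S * ((K*S)⁻¹)^2 - 2*K*(K*S)⁻¹ + 1 = 1 - 1/S := by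
    field_simp
    ring
  rw [hlhs]
  have h3 : S * (1/S) = 1 := by field_simp
  nlinarith [sq_nonneg (K*S*z.re - 1), sq_nonneg (K*S*z.im), mul_pos hK hS0, sq_nonneg z.im,
    mul_pos (mul_pos hK hK) hS0]

/-- the weights `w_j = (M^d ∑_s sinc²(Mπ(x_j - x_s)))⁻¹` minimize
the squared Frobenius norm `‖M^d · C_n W - I_N‖_F²` over all diagonal matrices
`W ∈ ℂ^{N×N}`, where `C_n` is the nonequispaced sinc matrix. -/
theorem sinc_weights_minimize_frobenius
    (d N M : ℕ) (hd : 1 ≤ d) (hM : 0 < M) (hMeven : Even M)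
    (x : Fin N → Fin d → ℝ)
    (Cn : Matrix (Fin N) (Fin N) ℂ)
    (hCn : ∀ j s, Cn j s = ((dsinc fun t => (M : ℝ) * π * (x j t - x s t)) : ℂ))
    (w : Fin N → ℂ)
    (hw : ∀ j, w j =
      ((((M : ℝ) ^ d * ∑ s, (dsinc fun t => (M : ℝ) * π * (x j t - x s t)) ^ 2)⁻¹ : ℝ) : ℂ)) :
    ∀ v : Fin N → ℂ,
      (∑ j, ∑ s, ‖(((M : ℂ) ^ d) • (Cn * Matrix.diagonal w) - 1) j s‖ ^ 2) ≤
        ∑ j, ∑ s, ‖(((M : ℂ) ^ d) • (Cn * Matrix.diagonal v) - 1) j s‖ ^ 2 := by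

  intro v
  have hK : (0:ℝ) < (M:ℝ)^d := by positivity
  have asym : ∀ j s : Fin N,
      (dsinc fun t => (M : ℝ) * π * (x j t - x s t)) =
        (dsinc fun t => (M : ℝ) * π * (x s t - x j t)) := by
    intro j s
    rw [show (fun t => (M : ℝ) * π * (x j t - x s t)) =
        (fun t => -((M : ℝ) * π * (x s t - x j t))) from funext fun t => by ring]
    exact dsinc_neg _
  have entry : ∀ (u : Fin N → ℂ) (j s : Fin N),
      (((M : ℂ) ^ d) • (Cn * Matrix.diagonal u) - 1) j s =
        (((M:ℝ)^d : ℝ) : ℂ) * ((dsinc fun t => (M : ℝ) * π * (x j t - x s t) : ℝ) : ℂ) * u s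
          - (if j = s then 1 else 0) := by
    intro u j s
    simp only [Matrix.sub_apply, Matrix.smul_apply, Matrix.mul_diagonal, Matrix.one_apply,
      hCn, smul_eq_mul]
    rw [show ((M:ℂ)^d) = (((M:ℝ)^d : ℝ) : ℂ) by push_cast; ring]
    ring
  simp only [entry]
  rw [Finset.sum_comm]
  rw [Finset.sum_comm (s := Finset.univ) (t := Finset.univ)
    (f := fun j s => ‖(((M:ℝ)^d : ℝ) : ℂ) *
      ((dsinc fun t => (M : ℝ) * π * (x j t - x s t) : ℝ) : ℂ) * v s
        - (if j = s then 1 else 0)‖ ^ 2)]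
  apply Finset.sum_le_sum
  intro s _
  have hAs : (dsinc fun t => (M : ℝ) * π * (x s t - x s t)) = 1 := by
    simp [dsinc, sinc_zero]
  have hws : w s = ((((M:ℝ)^d * ∑ i, (dsinc fun t => (M : ℝ) * π * (x i t - x s t)) ^ 2)⁻¹ : ℝ) : ℂ) := by
    rw [hw s]
    have h : (∑ i, (dsinc fun t => (M:ℝ)*π*(x s t - x i t))^2)
        = ∑ i, (dsinc fun t => (M:ℝ)*π*(x i t - x s t))^2 :=
      Finset.sum_congr rfl fun i _ => by rw [asym s i]
    rw [h]
  rw [show (fun j => ‖(((M:ℝ)^d : ℝ) : ℂ) *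
      ((dsinc fun t => (M : ℝ) * π * (x j t - x s t) : ℝ) : ℂ) * w s
        - (if j = s then 1 else 0)‖ ^ 2) = fun j => ‖(((M:ℝ)^d : ℝ) : ℂ) *
      ((dsinc fun t => (M : ℝ) * π * (x j t - x s t) : ℝ) : ℂ) *
        (((((M:ℝ)^d * ∑ i, (dsinc fun t => (M : ℝ) * π * (x i t - x s t)) ^ 2)⁻¹ : ℝ)) : ℂ)
        - (if j = s then 1 else 0)‖ ^ 2 from funext fun j => by rw [hws]]
  exact col ((M:ℝ)^d) hK (fun j => dsinc fun t => (M : ℝ) * π * (x j t - x s t)) s hAs (v s)
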